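/- On the domain ℤ/pℤ with p an odd prime, for every integer a, the unary-in-two-variables operation (x,y) ↦ a·x − (a−1)·y (mod p) lies in the clone generated by the averaging operation f(x,y) := 2⁻¹·(x+y) (mod p). -/

import Mathlib

/-- Membership in the clone generated by a single binary operation `f`. -/
inductive InClone {D : Type*} (f : (Fin 2 → D) → D) :
    {n : ℕ} → ((Fin n → D) → D) → Prop
  | gen : InClone f f
  | proj {n : ℕ} (i : Fin n) : InClone f (fun x => x i)
  | comp {m n : ℕ} (g : (Fin m → D) → D) (h : Fin m → (Fin n → D) → D) :
      InClone f g → (∀ i, InClone f (h i)) →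
      InClone f (fun x => g (fun i => h i x))

private def opc (p : ℕ) (c : ZMod p) : (Fin 2 → ZMod p) → ZMod p :=
  fun x => c * x 0 - (c - 1) * x 1

private lemma two_ne (p : ℕ) (hp : p.Prime) (hodd : Odd p) : (2 : ZMod p) ≠ 0 := by
  intro h
  have hd : p ∣ 2 := by
    have h2 : ((2 : ℕ) : ZMod p) = 0 := by exact_mod_cast h
    exact (ZMod.natCast_eq_zero_iff 2 p).mp h2
  have hpe : p = 2 := (Nat.prime_dvd_prime_iff_eq hp Nat.prime_two).mp hd
  rw [hpe] at hodd
  exact (by decide : ¬ Odd 2) hodd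

private lemma opc_mid (p : ℕ) (hp : p.Prime) (hodd : Odd p) (c d : ZMod p)
    (hc : InClone (fun x : Fin 2 → ZMod p => (2 : ZMod p)⁻¹ * (x 0 + x 1)) (opc p c))
    (hd : InClone (fun x : Fin 2 → ZMod p => (2 : ZMod p)⁻¹ * (x 0 + x 1)) (opc p d)) :
    InClone (fun x : Fin 2 → ZMod p => (2 : ZMod p)⁻¹ * (x 0 + x 1))
      (opc p ((c + d) * (2 : ZMod p)⁻¹)) := by
  haveI := Fact.mk hp
  have h2 := two_ne p hp hodd
  have H := InClone.comp (f := fun x : Fin 2 → ZMod p => (2 : ZMod p)⁻¹ * (x 0 + x 1))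
      _ ![opc p c, opc p d] InClone.gen (by
        intro i; fin_cases i <;> simpa using ‹_›)
  · convert H using 1
    funext x
    simp only [opc, Matrix.cons_val_zero, Matrix.cons_val_one, Matrix.head_cons]
    field_simp
    all_goals ring

private lemma opc_zero (p : ℕ) :
    InClone (fun x : Fin 2 → ZMod p => (2 : ZMod p)⁻¹ * (x 0 + x 1)) (opc p 0) := by
  have : opc p 0 = fun x : Fin 2 → ZMod p => x 1 := by
    funext x; simp [opc]
  rw [this]; exact InClone.proj 1

private lemma opc_one (p : ℕ) :
    InClone (fun x : Fin 2 → ZMod p => (2 : ZMod p)⁻¹ * (x 0 + x 1)) (opc p 1) := by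
  have : opc p 1 = fun x : Fin 2 → ZMod p => x 0 := by
    funext x; simp [opc]
  rw [this]; exact InClone.proj 0

private lemma opc_dyadic (p : ℕ) (hp : p.Prime) (hodd : Odd p) :
    ∀ N k : ℕ, k ≤ 2 ^ N →
      InClone (fun x : Fin 2 → ZMod p => (2 : ZMod p)⁻¹ * (x 0 + x 1))
        (opc p ((k : ZMod p) * ((2 : ZMod p) ^ N)⁻¹)) := by
  haveI := Fact.mk hp
  have h2 := two_ne p hp hodd
  intro N
  induction N with
  | zero =>
    intro k hk
    interval_cases k
    · simpa using opc_zero p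
    · simpa using opc_one p
  | succ N ih =>
    intro k hk
    have hi : min k (2 ^ N) ≤ 2 ^ N := min_le_right _ _
    have hj : k - min k (2 ^ N) ≤ 2 ^ N := by
      rcases le_total k (2 ^ N) with h | h
      · simp [min_eq_left h]
      · rw [min_eq_right h]
        omega
    have H := opc_mid p hp hodd _ _ (ih _ hi) (ih _ hj)
    convert H using 2
    have hsum : min k (2 ^ N) + (k - min k (2 ^ N)) = k := by omega
    rw [pow_succ, mul_inv,
      show ((k : ZMod p)) = ((k ⊓ 2 ^ N : ℕ) : ZMod p) + ((k - k ⊓ 2 ^ N : ℕ) : ZMod p) from by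
        rw [← Nat.cast_add, hsum]]
    ring

theorem stmt_3 (p : ℕ) (hp : p.Prime) (hodd : Odd p) (a : ℤ) :
    InClone (fun x : Fin 2 → ZMod p => (2 : ZMod p)⁻¹ * (x 0 + x 1))
      (fun x : Fin 2 → ZMod p => (a : ZMod p) * x 0 - ((a : ZMod p) - 1) * x 1) := by
  haveI := Fact.mk hp
  have h2 := two_ne p hp hodd
  set r : ℕ := (a % (p : ℤ)).toNat with hr
  have hp0 : 0 < p := hp.pos
  have hppos : (0 : ℤ) < (p : ℤ) := by exact_mod_cast hp0
  have hnn : 0 ≤ a % (p : ℤ) := Int.emod_nonneg a hppos.ne'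
  have hrp : r < p := by
    have := Int.emod_lt_of_pos a hppos
    omega
  have hcast : ((r : ZMod p)) = (a : ZMod p) := by
    have h1 : ((r : ℤ) : ZMod p) = (a : ZMod p) := by
      rw [hr, Int.toNat_of_nonneg hnn]
      exact (ZMod.intCast_eq_intCast_iff _ _ _).mpr (Int.emod_emod_of_dvd a dvd_rfl)
    exact_mod_cast h1
  have hfermat : (2 : ZMod p) ^ (p - 1) = 1 := ZMod.pow_card_sub_one_eq_one h2
  have hrle : r ≤ 2 ^ (p - 1) := by
    have := Nat.lt_two_pow_self (n := p - 1)
    omega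
  have H := opc_dyadic p hp hodd (p - 1) r hrle
  rw [hfermat] at H
  simp only [inv_one, mul_one, hcast] at H
  exact H
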